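/- arXiv:1501.06164 — 3 statements merged into one kernel-verified Lean document; each statement's English description precedes it below -/
import Mathlib

section
/- Let E ⊆ ℝⁿ be measurable with finite measure, K a compact metric space, and v_m, v : E → K measurable. If for every continuous Φ : E × K → ℝ with ∫_E max_{X∈K}|Φ(x,X)|dx < ∞ one has ∫_E Φ(x, v_m(x)) dx → ∫_E Φ(x, v(x)) dx, then v_m → v in measure on E; in particular a subsequence converges to v almost everywhere. -/
open MeasureTheory Filter Topology

/-- If integrals of every Carathéodory test function against v_m converge to the
corresponding integral against v, then v_m → v in measure, and a subsequence
converges almost everywhere. -/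
theorem stmt1 {n : ℕ} (E : Set (EuclideanSpace ℝ (Fin n))) (hE : MeasurableSet E)
    (hEfin : volume E < ⊤)
    {K : Type*} [MetricSpace K] [CompactSpace K] [MeasurableSpace K] [BorelSpace K]
    (v : ℕ → EuclideanSpace ℝ (Fin n) → K) (vlim : EuclideanSpace ℝ (Fin n) → K)
    (hv : ∀ m, Measurable (v m)) (hvlim : Measurable vlim)
    (hconv : ∀ Φ : EuclideanSpace ℝ (Fin n) → K → ℝ,
      (∀ X : K, Measurable fun x => Φ x X) →
      (∀ᵐ x ∂(volume.restrict E), Continuous fun X => Φ x X) →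
      Integrable (fun x => ⨆ X : K, |Φ x X|) (volume.restrict E) →
      Tendsto (fun m => ∫ x, Φ x (v m x) ∂(volume.restrict E)) atTop
        (𝓝 (∫ x, Φ x (vlim x) ∂(volume.restrict E)))) :
    TendstoInMeasure (volume.restrict E) v atTop vlim ∧
      ∃ ns : ℕ → ℕ, StrictMono ns ∧
        ∀ᵐ x ∂(volume.restrict E), Tendsto (fun k => v (ns k) x) atTop (𝓝 (vlim x)) := by
  have hK : Nonempty K := ⟨vlim 0⟩
  set μ := volume.restrict E with hμ
  set C := Metric.diam (Set.univ : Set K) with hC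
  have hbd : ∀ X y : K, dist X y ≤ C := fun X y =>
    Metric.dist_le_diam_of_mem isCompact_univ.isBounded (Set.mem_univ _) (Set.mem_univ _)
  set g : K → ℝ := fun y => ⨆ X : K, dist X y with hg
  have hbdd : ∀ y : K, BddAbove (Set.range fun X : K => dist X y) := fun y =>
    ⟨C, by rintro _ ⟨X, rfl⟩; exact hbd X y⟩
  have hgle : ∀ y z : K, g y ≤ g z + dist y z := by
    intro y z
    refine ciSup_le fun X => ?_
    calc dist X y ≤ dist X z + dist z y := dist_triangle X z y
    _ ≤ g z + dist y z :=
      add_le_add (le_ciSup (hbdd z) X) (le_of_eq (dist_comm z y))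
  have hglip : LipschitzWith 1 g := by
    refine LipschitzWith.of_dist_le_mul fun y z => ?_
    rw [Real.dist_eq]
    simp only [NNReal.coe_one, one_mul]
    rw [abs_sub_le_iff]
    constructor
    · linarith [hgle y z]
    · linarith [hgle z y, dist_comm y z]
  have hgnn : ∀ y : K, 0 ≤ g y := fun y => by
    have := le_ciSup (hbdd y) y
    simpa using this
  have hgC : ∀ y : K, g y ≤ C := fun y => ciSup_le fun X => hbd X y
  -- L¹ convergence of the distance function
  haveI : IsFiniteMeasure μ := ⟨by rwa [hμ, Measure.restrict_apply_univ]⟩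
  have hint : ∀ m, Integrable (fun x => dist (v m x) (vlim x)) μ := by
    intro m
    refine Integrable.mono' (integrable_const C)
      (((hv m).dist hvlim).aestronglyMeasurable) ?_
    · exact Eventually.of_forall fun x => by
        rw [Real.norm_eq_abs, abs_of_nonneg dist_nonneg]; exact hbd _ _
  have hD : Tendsto (fun m => ∫ x, dist (v m x) (vlim x) ∂μ) atTop (𝓝 0) := by
    have h := hconv (fun x X => dist X (vlim x))
      (fun X => measurable_const.dist hvlim)
      (Eventually.of_forall fun x => continuous_id.dist continuous_const)
      ?_
    · simpa using h
    · have heq : (fun x => ⨆ X : K, |dist X (vlim x)|) = fun x => g (vlim x) := by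
        funext x; simp [hg, abs_of_nonneg dist_nonneg]
      rw [heq]
      refine Integrable.mono' (integrable_const C)
        ((hglip.continuous.measurable.comp hvlim).aestronglyMeasurable) ?_
      exact Eventually.of_forall fun x => by
        rw [Real.norm_eq_abs, abs_of_nonneg (hgnn _)]; exact hgC _
  -- Markov's inequality
  have htim : TendstoInMeasure μ v atTop vlim := by
    rw [tendstoInMeasure_iff_dist]
    intro ε hε
    have key : ∀ m, μ {x | ε ≤ dist (v m x) (vlim x)} ≤
        ENNReal.ofReal ((∫ x, dist (v m x) (vlim x) ∂μ) / ε) := by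
      intro m
      have hmeas : AEMeasurable (fun x => ENNReal.ofReal (dist (v m x) (vlim x))) μ :=
        (ENNReal.measurable_ofReal.comp ((hv m).dist hvlim)).aemeasurable
      have h1 := meas_ge_le_lintegral_div hmeas (ε := ENNReal.ofReal ε)
        (ENNReal.ofReal_pos.mpr hε).ne' ENNReal.ofReal_ne_top
      have hset : {x | ENNReal.ofReal ε ≤ ENNReal.ofReal (dist (v m x) (vlim x))}
          = {x | ε ≤ dist (v m x) (vlim x)} := by
        ext x; simp [ENNReal.ofReal_le_ofReal_iff dist_nonneg]
      have hlint : ∫⁻ x, ENNReal.ofReal (dist (v m x) (vlim x)) ∂μ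
          = ENNReal.ofReal (∫ x, dist (v m x) (vlim x) ∂μ) :=
        (ofReal_integral_eq_lintegral_ofReal (hint m)
          (Eventually.of_forall fun x => dist_nonneg)).symm
      rw [hset, hlint] at h1
      rwa [ENNReal.ofReal_div_of_pos hε]
    have h2 : Tendsto (fun m => ENNReal.ofReal ((∫ x, dist (v m x) (vlim x) ∂μ) / ε))
        atTop (𝓝 0) := by
      have := ENNReal.tendsto_ofReal (hD.div_const ε)
      simpa using this
    exact tendsto_of_tendsto_of_tendsto_of_le_of_le tendsto_const_nhds h2
      (fun m => zero_le) key
  exact ⟨htim, htim.exists_seq_tendsto_ae⟩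
end

section
/- Let B¹,...,Bᴺ ∈ ℝ_s^{N×N} and A¹,...,Aᴺ ∈ ℝ_s^{n×n} be positive semidefinite with the ranges Σ^γ := range(B^γ) mutually orthogonal in ℝᴺ, and set T^γ := range(A^γ). Define A_{αiβj} := Σ_γ B^γ_{αβ} A^γ_{ij} viewed as a linear map ℝ^{N×n} → ℝ^{N×n}, (A:Q)_{αi} = Σ_{β,j} A_{αiβj} Q_{βj}. Then the range of this linear map equals the orthogonal direct sum ⊕_γ (Σ^γ ⊗ T^γ) ⊆ ℝ^{N×n}. -/
open scoped BigOperators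

open Matrix

private lemma symm_dot {m : ℕ} {M : Matrix (Fin m) (Fin m) ℝ} (hM : Mᵀ = M)
    (v w : Fin m → ℝ) : dotProduct (M.mulVec v) w = dotProduct v (M.mulVec w) := by
  rw [Matrix.dotProduct_mulVec, ← Matrix.mulVec_transpose, hM, dotProduct_comm]

private lemma range_sq {m : ℕ} {M : Matrix (Fin m) (Fin m) ℝ} (hM : Mᵀ = M)
    {η : Fin m → ℝ} (hη : η ∈ LinearMap.range M.mulVecLin) :
    ∃ x, M.mulVec (M.mulVec x) = η := by
  set f := M.mulVecLin with hf
  have hker : LinearMap.ker (f ∘ₗ f) = LinearMap.ker f := by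
    apply le_antisymm
    · intro x hx
      rw [LinearMap.mem_ker, LinearMap.comp_apply] at hx
      have h0 : dotProduct (f x) (f x) = 0 := by
        have := symm_dot hM x (M.mulVec x)
        simp only [hf, Matrix.mulVecLin_apply] at hx ⊢
        rw [this, hx, dotProduct_zero]
      rw [dotProduct_self_eq_zero] at h0
      exact h0
    · intro x hx
      rw [LinearMap.mem_ker] at hx ⊢
      simp [LinearMap.comp_apply, hx]
  have hle : LinearMap.range (f ∘ₗ f) ≤ LinearMap.range f := by
    rintro _ ⟨x, rfl⟩; exact ⟨f x, rfl⟩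
  have heq : LinearMap.range (f ∘ₗ f) = LinearMap.range f := by
    apply Submodule.eq_of_le_of_finrank_le hle
    have h1 := LinearMap.finrank_range_add_finrank_ker f
    have h2 := LinearMap.finrank_range_add_finrank_ker (f ∘ₗ f)
    rw [hker] at h2
    omega
  rw [← heq] at hη
  obtain ⟨x, hx⟩ := hη
  exact ⟨x, hx⟩

/-- Claim 40: the range of the linear map Q ↦ A : Q determined by a decomposable
tensor A_{αiβj} = Σ_γ B^γ_{αβ} A^γ_{ij} equals the (orthogonal direct) sum of the
subspaces Σ^γ ⊗ T^γ, where Σ^γ = range B^γ and T^γ = range A^γ. -/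
theorem stmt8 {N n : ℕ} (B : Fin N → Matrix (Fin N) (Fin N) ℝ)
    (A : Fin N → Matrix (Fin n) (Fin n) ℝ)
    (hB : ∀ γ, (B γ).PosSemidef) (hA : ∀ γ, (A γ).PosSemidef)
    (horth : ∀ γ δ, γ ≠ δ →
      ∀ x ∈ LinearMap.range (B γ).mulVecLin, ∀ y ∈ LinearMap.range (B δ).mulVecLin,
        dotProduct x y = 0)
    (L : Matrix (Fin N) (Fin n) ℝ → Matrix (Fin N) (Fin n) ℝ)
    (hL : ∀ Q, L Q = Matrix.of fun α i => ∑ β, ∑ j, (∑ γ, B γ α β * A γ i j) * Q β j) :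
    Set.range L = ↑(⨆ γ : Fin N, Submodule.span ℝ
      {M : Matrix (Fin N) (Fin n) ℝ | ∃ η a, η ∈ LinearMap.range (B γ).mulVecLin ∧
        a ∈ LinearMap.range (A γ).mulVecLin ∧ M = Matrix.of fun α i => η α * a i}) := by
  have hBsymm : ∀ γ, (B γ)ᵀ = B γ := fun γ => by
    rw [← Matrix.conjTranspose_eq_transpose_of_trivial]; exact (hB γ).1
  have hAsymm : ∀ γ, (A γ)ᵀ = A γ := fun γ => by
    rw [← Matrix.conjTranspose_eq_transpose_of_trivial]; exact (hA γ).1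
  -- orthogonality kills cross terms
  have hkill : ∀ γ δ, δ ≠ γ → ∀ v ∈ LinearMap.range (B γ).mulVecLin,
      (B δ).mulVec v = 0 := by
    intro γ δ hδ v hv
    have h := horth γ δ (Ne.symm hδ) v hv ((B δ).mulVec ((B δ).mulVec v))
      ⟨(B δ).mulVec v, rfl⟩
    have h2 : dotProduct ((B δ).mulVec v) ((B δ).mulVec v) = 0 := by
      rw [symm_dot (hBsymm δ)]; exact h
    rwa [dotProduct_self_eq_zero] at h2
  -- the set membership as submodule
  set S := ⨆ γ : Fin N, Submodule.span ℝ
      {M : Matrix (Fin N) (Fin n) ℝ | ∃ η a, η ∈ LinearMap.range (B γ).mulVecLin ∧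
        a ∈ LinearMap.range (A γ).mulVecLin ∧ M = Matrix.of fun α i => η α * a i} with hS
  apply Set.Subset.antisymm
  · rintro _ ⟨Q, rfl⟩
    have hdecomp : L Q = ∑ γ, ∑ β, ∑ j, Q β j •
        (Matrix.of fun α i => B γ α β * A γ i j : Matrix (Fin N) (Fin n) ℝ) := by
      ext α i
      rw [hL]
      simp only [Matrix.of_apply, Matrix.sum_apply, Matrix.smul_apply, smul_eq_mul]
      symm
      calc ∑ γ : Fin N, ∑ β : Fin N, ∑ j : Fin n, Q β j * (B γ α β * A γ i j)
          = ∑ β : Fin N, ∑ γ : Fin N, ∑ j : Fin n, Q β j * (B γ α β * A γ i j) :=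
            Finset.sum_comm
        _ = ∑ β : Fin N, ∑ j : Fin n, ∑ γ : Fin N, Q β j * (B γ α β * A γ i j) :=
            Finset.sum_congr rfl fun β _ => Finset.sum_comm
        _ = ∑ β : Fin N, ∑ j : Fin n, (∑ γ : Fin N, B γ α β * A γ i j) * Q β j := by
            refine Finset.sum_congr rfl fun β _ => Finset.sum_congr rfl fun j _ => ?_
            rw [Finset.sum_mul]
            exact Finset.sum_congr rfl fun γ _ => by ring
    rw [hdecomp]
    refine Submodule.sum_mem _ fun γ _ => Submodule.sum_mem _ fun β _ =>
      Submodule.sum_mem _ fun j _ => Submodule.smul_mem _ _ ?_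
    refine Submodule.mem_iSup_of_mem γ (Submodule.subset_span ?_)
    refine ⟨fun α => B γ α β, fun i => A γ i j, ⟨Pi.single β 1, ?_⟩, ⟨Pi.single j 1, ?_⟩, rfl⟩
    · rw [Matrix.mulVecLin_apply, Matrix.mulVec_single]; funext α; simp
    · rw [Matrix.mulVecLin_apply, Matrix.mulVec_single]; funext i; simp
  · intro M hM
    have hF : ∃ F : Matrix (Fin N) (Fin n) ℝ →ₗ[ℝ] Matrix (Fin N) (Fin n) ℝ, ⇑F = L := by
      refine ⟨{ toFun := L, map_add' := ?_, map_smul' := ?_ }, rfl⟩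
      · intro Q R
        simp only [hL]
        ext α i
        simp [Matrix.add_apply, mul_add, Finset.sum_add_distrib]
      · intro c Q
        simp only [hL]
        ext α i
        simp only [Matrix.of_apply, Matrix.smul_apply, smul_eq_mul, RingHom.id_apply,
          Finset.mul_sum]
        refine Finset.sum_congr rfl fun β _ => Finset.sum_congr rfl fun j _ => by ring
    obtain ⟨F, hFL⟩ := hF
    have : S ≤ LinearMap.range F := by
      refine iSup_le fun γ => Submodule.span_le.mpr ?_
      rintro _ ⟨η, a, hη, ⟨y, hy⟩, rfl⟩
      obtain ⟨x', hx'⟩ := range_sq (hBsymm γ) hη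
      set v := (B γ).mulVec x' with hv
      have hvmem : v ∈ LinearMap.range (B γ).mulVecLin := ⟨x', rfl⟩
      refine ⟨Matrix.of fun β j => v β * y j, ?_⟩
      show F _ = _
      rw [show (F (Matrix.of fun β j => v β * y j) : Matrix (Fin N) (Fin n) ℝ)
        = L (Matrix.of fun β j => v β * y j) from congrFun hFL _]
      ext α i
      rw [hL]
      simp only [Matrix.of_apply]
      have step1 : ∀ β j, (∑ δ, B δ α β * A δ i j) * (v β * y j)
          = ∑ δ, (B δ α β * v β) * (A δ i j * y j) := by
        intro β j; rw [Finset.sum_mul]; exact Finset.sum_congr rfl fun δ _ => by ring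
      calc (∑ β, ∑ j, (∑ δ, B δ α β * A δ i j) * (Matrix.of fun β j => v β * y j) β j)
          = ∑ β, ∑ j, ∑ δ, (B δ α β * v β) * (A δ i j * y j) := by
            refine Finset.sum_congr rfl fun β _ => Finset.sum_congr rfl fun j _ => step1 β j
        _ = ∑ β, ∑ δ, ∑ j, (B δ α β * v β) * (A δ i j * y j) :=
            Finset.sum_congr rfl fun β _ => Finset.sum_comm
        _ = ∑ δ, ∑ β, ∑ j, (B δ α β * v β) * (A δ i j * y j) := Finset.sum_comm
        _ = ∑ δ, ((B δ).mulVec v α) * ((A δ).mulVec y i) := by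
            refine Finset.sum_congr rfl fun δ _ => ?_
            have h' : (B δ *ᵥ v) α * (A δ *ᵥ y) i
                = ∑ β, ∑ j, (B δ α β * v β) * (A δ i j * y j) := by
              simp only [Matrix.mulVec, dotProduct]
              rw [Finset.sum_mul_sum]
            exact h'.symm
        _ = ((B γ).mulVec v α) * ((A γ).mulVec y i) := by
            refine Finset.sum_eq_single γ (fun δ _ hδ => ?_) (by simp)
            rw [hkill γ δ hδ v hvmem]; simp
        _ = η α * a i := by rw [hx', ← hy, Matrix.mulVecLin_apply]
    obtain ⟨Q, hQ⟩ := this hM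
    exact ⟨Q, by rw [← hFL]; exact hQ⟩
end

section
/- Let 𝔛 be a nonempty set, (X, ‖·‖) a Banach space, and F, A : 𝔛 → X maps satisfying ‖F(u) − F(v) − (A(u) − A(v))‖ ≤ K ‖A(u) − A(v)‖ for some K ∈ (0,1) and all u, v ∈ 𝔛. If A is a bijection from 𝔛 onto X, then F is also a bijection from 𝔛 onto X. -/
/-- Campanato's theorem on near operators: if F is near the bijection A, i.e.
‖F u − F v − (A u − A v)‖ ≤ K ‖A u − A v‖ with 0 < K < 1, then F is a bijection. -/
theorem stmt12 {𝔛 : Type*} [Nonempty 𝔛] {X : Type*} [NormedAddCommGroup X]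
    [NormedSpace ℝ X] [CompleteSpace X]
    (F A : 𝔛 → X) (K : ℝ) (hK0 : 0 < K) (hK1 : K < 1)
    (hnear : ∀ u v : 𝔛, ‖F u - F v - (A u - A v)‖ ≤ K * ‖A u - A v‖)
    (hA : Function.Bijective A) : Function.Bijective F := by
  obtain ⟨e, he⟩ : ∃ e : 𝔛 ≃ X, (e : 𝔛 → X) = A := ⟨Equiv.ofBijective A hA, rfl⟩
  constructor
  · intro u v huv
    have h := hnear u v
    rw [huv, sub_self, zero_sub, norm_neg] at h
    have : ‖A u - A v‖ = 0 := by nlinarith [norm_nonneg (A u - A v)]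
    have : A u = A v := by
      rwa [← sub_eq_zero, ← norm_eq_zero]
    exact hA.1 this
  · intro f
    set g : X → X := fun w => w - F (e.symm w) + f with hg
    have hcontr : ContractingWith (⟨K, hK0.le⟩ : NNReal) g := by
      constructor
      · exact_mod_cast hK1
      · intro w w'
        rw [edist_dist, edist_dist]
        rw [ENNReal.ofReal_le_iff_le_toReal (by
          exact (ENNReal.mul_lt_top ENNReal.coe_lt_top (ENNReal.ofReal_lt_top)).ne)]
        rw [ENNReal.toReal_mul, ENNReal.toReal_ofReal dist_nonneg]
        show dist (g w) (g w') ≤ K * dist w w'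
        simp only [hg, dist_eq_norm]
        have h := hnear (e.symm w) (e.symm w')
        rw [← he] at h
        simp only [Equiv.apply_symm_apply] at h
        calc ‖w - F (e.symm w) + f - (w' - F (e.symm w') + f)‖
            = ‖-(F (e.symm w) - F (e.symm w') - (w - w'))‖ := by congr 1; abel
          _ ≤ K * ‖w - w'‖ := by rw [norm_neg]; exact h
    obtain ⟨w, hw, -⟩ := hcontr.exists_fixedPoint (Classical.arbitrary X)
      (by rw [edist_dist]; exact ENNReal.ofReal_ne_top)
    refine ⟨e.symm w, ?_⟩
    have : w - F (e.symm w) + f = w := hw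
    rw [sub_add_eq_add_sub, sub_eq_iff_eq_add, add_right_inj] at this
    exact this.symm
end
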